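/- For every n ∈ ℕ and every real u, Σ_{j=0}^n binom(n,j) u^j (1−u)^{n−j} F(j) = (2/π) · ∫_0^1 t^{−1/2} (1−t)^{1/2} (1−2ut)^n dt. -/

import Mathlib

/-- `F(m) = C(m, ⌊m/2⌋) · 2^{−m}`. -/
noncomputable def F' (m : ℕ) : ℝ := (m.choose (m / 2) : ℝ) / 2 ^ m

open Real MeasureTheory Set intervalIntegral Finset

lemma cosPowOdd (m : ℕ) : ∫ x in (0:ℝ)..π, Real.cos x ^ (2*m+1) = 0 := by
  induction m with
  | zero => simp [integral_cos]
  | succ k ih =>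
    have h : 2*(k+1)+1 = (2*k+1)+2 := by ring
    rw [h, integral_cos_pow, ih]
    simp

lemma cosPowEven (m : ℕ) :
    ∫ x in (0:ℝ)..π, Real.cos x ^ (2*m) = π * (Nat.centralBinom m) / 4^m := by
  induction m with
  | zero => simp [Nat.centralBinom]
  | succ k ih =>
    have h : 2*(k+1) = (2*k)+2 := by ring
    rw [h, integral_cos_pow, ih]
    have hc : ((k:ℝ)+1) * (Nat.centralBinom (k+1) : ℝ)
        = 2*(2*(k:ℝ)+1) * (Nat.centralBinom k : ℝ) := by
      exact_mod_cast Nat.succ_mul_centralBinom_succ k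
    have h4 : (4:ℝ)^(k+1) = 4 * 4^k := by ring
    simp only [Real.sin_pi, Real.sin_zero]
    push_cast
    rw [h4]
    have hk1 : ((k:ℝ)+1) ≠ 0 := by positivity
    have h4k : (4:ℝ)^k ≠ 0 := by positivity
    field_simp
    first
      | linear_combination (2*π*(4:ℝ)^k) * hc
      | linear_combination (-(2*π)) * hc

lemma choose_half (m : ℕ) : Nat.centralBinom (m+1) = 2 * (2*m+1).choose m := by
  have h1 : Nat.centralBinom (m+1) = (2*m+1+1).choose (m+1) := by
    have h : 2*(m+1) = 2*m+1+1 := by ring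
    rw [Nat.centralBinom, h]
  have h2 : (2*m+1).choose (m+1) = (2*m+1).choose m := by
    rw [← Nat.choose_symm (by omega : m ≤ 2*m+1)]
    congr 1; omega
  rw [h1, Nat.choose_succ_succ, h2]
  omega

lemma keyTrig (j : ℕ) :
    ∫ x in (0:ℝ)..π, (1 + Real.cos x)/2 * Real.cos x ^ j = π/2 * F' j := by
  have hint : ∀ k : ℕ, IntervalIntegrable (fun x => Real.cos x ^ k) volume 0 π :=
    fun k => (continuous_cos.pow k).intervalIntegrable 0 π
  have hsplit : ∫ x in (0:ℝ)..π, (1 + Real.cos x)/2 * Real.cos x ^ j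
      = ((∫ x in (0:ℝ)..π, Real.cos x ^ j) + ∫ x in (0:ℝ)..π, Real.cos x ^ (j+1))/2 := by
    rw [← intervalIntegral.integral_add (hint j) (hint (j+1)), ← intervalIntegral.integral_div]
    congr 1; funext x; ring
  rw [hsplit]
  rcases Nat.even_or_odd' j with ⟨m, rfl | rfl⟩
  · have h1 : (2*m)+1 = 2*m+1 := rfl
    rw [cosPowEven m, h1, cosPowOdd m]
    unfold F'
    have hd : (2*m)/2 = m := by omega
    rw [hd]
    have h2 : (2:ℝ)^(2*m) = 4^m := by rw [pow_mul]; norm_num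
    rw [h2]
    have hcb : (Nat.centralBinom m : ℝ) = ((2*m).choose m : ℝ) := by
      rw [Nat.centralBinom]
    rw [hcb, add_zero]
    ring
  · have h1 : (2*m+1)+1 = 2*(m+1) := by ring
    rw [cosPowOdd m, h1, cosPowEven (m+1)]
    unfold F'
    have hd : (2*m+1)/2 = m := by omega
    rw [hd]
    have hcb : (Nat.centralBinom (m+1) : ℝ) = 2 * ((2*m+1).choose m : ℝ) := by
      exact_mod_cast choose_half m
    rw [hcb]
    have h2 : (2:ℝ)^(2*m+1) = 2 * 4^m := by
      rw [pow_succ, pow_mul]; norm_num; ring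
    have h3 : (4:ℝ)^(m+1) = 4 * 4^m := by ring
    rw [h2, h3]
    have h4 : (4:ℝ)^m ≠ 0 := by positivity
    field_simp
    ring

lemma sqrt_aux (a s : ℝ) (ha : 0 < a) (ha1 : a < 1) (hs : 0 ≤ s)
    (h2 : s^2 = 4*a*(1-a)) :
    (s/2) * (a ^ (-(1/2):ℝ) * (1-a) ^ ((1/2):ℝ)) = 1 - a := by
  have ha1' : (0:ℝ) < 1 - a := by linarith
  have hs' : s = 2 * Real.sqrt a * Real.sqrt (1-a) := by
    have hsq : (2 * Real.sqrt a * Real.sqrt (1-a))^2 = s^2 := by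
      rw [h2, mul_pow, mul_pow, Real.sq_sqrt ha.le, Real.sq_sqrt ha1'.le]; ring
    have hnn : 0 ≤ 2 * Real.sqrt a * Real.sqrt (1-a) := by positivity
    calc s = Real.sqrt (s^2) := (Real.sqrt_sq hs).symm
      _ = Real.sqrt ((2 * Real.sqrt a * Real.sqrt (1-a))^2) := by rw [hsq]
      _ = 2 * Real.sqrt a * Real.sqrt (1-a) := Real.sqrt_sq hnn
  have hra : a ^ (-(1/2):ℝ) = (Real.sqrt a)⁻¹ := by
    rw [Real.rpow_neg ha.le, ← Real.sqrt_eq_rpow]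
  have hrb : (1-a) ^ ((1/2):ℝ) = Real.sqrt (1-a) := (Real.sqrt_eq_rpow _).symm
  rw [hs', hra, hrb]
  have hsa : Real.sqrt a ≠ 0 := ne_of_gt (Real.sqrt_pos.mpr ha)
  have hmul : Real.sqrt (1-a) * Real.sqrt (1-a) = 1 - a := Real.mul_self_sqrt ha1'.le
  calc (2 * Real.sqrt a * Real.sqrt (1-a) / 2) * ((Real.sqrt a)⁻¹ * Real.sqrt (1-a))
      = (Real.sqrt a * (Real.sqrt a)⁻¹) * (Real.sqrt (1-a) * Real.sqrt (1-a)) := by ring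
    _ = 1 - a := by rw [mul_inv_cancel₀ hsa, hmul, one_mul]

lemma substLemma (g : ℝ → ℝ) (hg : Continuous g) :
    ∫ t in (0:ℝ)..1, t ^ (-(1/2):ℝ) * ((1-t) ^ ((1/2):ℝ) * g t)
      = ∫ x in (0:ℝ)..π, (1 + Real.cos x)/2 * g ((1 - Real.cos x)/2) := by
  have h1 : ∫ t in (0:ℝ)..1, t ^ (-(1/2):ℝ) * ((1-t) ^ ((1/2):ℝ) * g t)
      = ∫ t in Ioo (0:ℝ) 1, t ^ (-(1/2):ℝ) * ((1-t) ^ ((1/2):ℝ) * g t) := by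
    rw [intervalIntegral.integral_of_le zero_le_one,
      MeasureTheory.integral_Ioc_eq_integral_Ioo]
  have h2 : ∫ x in (0:ℝ)..π, (1 + Real.cos x)/2 * g ((1 - Real.cos x)/2)
      = ∫ x in Ioo (0:ℝ) π, (1 + Real.cos x)/2 * g ((1 - Real.cos x)/2) := by
    rw [intervalIntegral.integral_of_le Real.pi_pos.le,
      MeasureTheory.integral_Ioc_eq_integral_Ioo]
  rw [h1, h2]
  have hbnd : ∀ x ∈ Ioo (0:ℝ) π, -1 < Real.cos x ∧ Real.cos x < 1 := by
    rintro x ⟨hx0, hxπ⟩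
    constructor
    · have := Real.strictAntiOn_cos ⟨hx0.le, hxπ.le⟩ ⟨Real.pi_pos.le, le_rfl⟩ hxπ
      rwa [Real.cos_pi] at this
    · have := Real.strictAntiOn_cos ⟨le_rfl, Real.pi_pos.le⟩ ⟨hx0.le, hxπ.le⟩ hx0
      rwa [Real.cos_zero] at this
  have himg : (fun x => (1 - Real.cos x)/2) '' Ioo 0 π = Ioo (0:ℝ) 1 := by
    ext t
    constructor
    · rintro ⟨x, hx, rfl⟩
      obtain ⟨hc1, hc2⟩ := hbnd x hx
      exact ⟨by linarith, by linarith⟩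
    · rintro ⟨ht0, ht1⟩
      refine ⟨Real.arccos (1 - 2*t), ⟨?_, ?_⟩, ?_⟩
      · exact Real.arccos_pos.mpr (by linarith)
      · refine lt_of_le_of_ne (Real.arccos_le_pi _) fun h => ?_
        have := Real.arccos_eq_pi.mp h
        linarith
      · show (1 - Real.cos (Real.arccos (1 - 2*t)))/2 = t
        rw [Real.cos_arccos (by linarith) (by linarith)]
        ring
  have hderiv : ∀ x ∈ Ioo (0:ℝ) π,
      HasDerivWithinAt (fun x => (1 - Real.cos x)/2) (Real.sin x / 2) (Ioo 0 π) x := by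
    intro x _
    have : HasDerivAt (fun x => (1 - Real.cos x)/2) (Real.sin x / 2) x := by
      simpa using ((Real.hasDerivAt_cos x).const_sub 1).div_const 2
    exact this.hasDerivWithinAt
  have hmono : StrictMonoOn (fun x => (1 - Real.cos x)/2) (Icc 0 π) := by
    intro a ha b hb hab
    have := Real.strictAntiOn_cos ha hb hab
    simp only
    linarith
  have hinj : InjOn (fun x => (1 - Real.cos x)/2) (Ioo 0 π) :=
    hmono.injOn.mono Ioo_subset_Icc_self
  rw [← himg, MeasureTheory.integral_image_eq_integral_abs_deriv_smul
    measurableSet_Ioo hderiv hinj]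
  apply MeasureTheory.setIntegral_congr_fun measurableSet_Ioo
  intro x hx
  obtain ⟨hc1, hc2⟩ := hbnd x hx
  obtain ⟨hx0, hxπ⟩ := hx
  have hsin : 0 < Real.sin x := Real.sin_pos_of_pos_of_lt_pi hx0 hxπ
  have habs : |Real.sin x / 2| = Real.sin x / 2 := abs_of_pos (by linarith)
  simp only [smul_eq_mul, habs]
  set a := (1 - Real.cos x)/2 with hadef
  have h1a : 1 - a = (1 + Real.cos x)/2 := by rw [hadef]; ring
  have hkey : (Real.sin x / 2) * (a ^ (-(1/2):ℝ) * (1-a) ^ ((1/2):ℝ)) = 1 - a := by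
    apply sqrt_aux a (Real.sin x) (by rw [hadef]; linarith) (by rw [hadef]; linarith) hsin.le
    have := Real.sin_sq_add_cos_sq x
    rw [hadef]; nlinarith
  calc Real.sin x / 2 * (a ^ (-(1/2):ℝ) * ((1-a) ^ ((1/2):ℝ) * g a))
      = (Real.sin x / 2) * (a ^ (-(1/2):ℝ) * (1-a) ^ ((1/2):ℝ)) * g a := by ring
    _ = (1 - a) * g a := by rw [hkey]
    _ = (1 + Real.cos x)/2 * g ((1 - Real.cos x)/2) := by rw [h1a, hadef]

lemma keyIntegral (j : ℕ) :
    ∫ t in (0:ℝ)..1, t ^ (-(1/2):ℝ) * ((1-t) ^ ((1/2):ℝ) * (1-2*t)^j) = π/2 * F' j := by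
  rw [substLemma (fun t => (1-2*t)^j) (by fun_prop)]
  have he : ∀ x : ℝ, (1 - 2*((1 - Real.cos x)/2))^j = Real.cos x ^ j := by
    intro x
    congr 1
    ring
  simp only [he]
  exact keyTrig j

/-- For every `n` and real `u`, the Euler integral representation
`Σ_{j=0}^n C(n,j) u^j (1−u)^{n−j} F(j) = (2/π) ∫_0^1 t^{−1/2} (1−t)^{1/2} (1−2ut)^n dt`. -/
theorem binomial_expectation_eq_integral (n : ℕ) (u : ℝ) :
    ∑ j ∈ Finset.range (n + 1), (n.choose j : ℝ) * u ^ j * (1 - u) ^ (n - j) * F' j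
      = (2 / Real.pi) *
          ∫ t in (0:ℝ)..1, t ^ (-(1/2) : ℝ) * (1 - t) ^ ((1/2) : ℝ) * (1 - 2 * u * t) ^ n := by
  have hint : ∀ j : ℕ,
      IntervalIntegrable (fun t : ℝ => t ^ (-(1/2):ℝ) * ((1-t) ^ ((1/2):ℝ) * (1-2*t)^j))
        volume 0 1 := by
    intro j
    apply IntervalIntegrable.mul_continuousOn
      (intervalIntegrable_rpow' (by norm_num))
    apply Continuous.continuousOn
    exact ((continuous_const.sub continuous_id).rpow_const
      (fun x => Or.inr (by norm_num))).mul
      ((continuous_const.sub (continuous_const.mul continuous_id)).pow j)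
  have hcongr : ∫ t in (0:ℝ)..1, t ^ (-(1/2) : ℝ) * (1 - t) ^ ((1/2) : ℝ) * (1 - 2 * u * t) ^ n
      = ∫ t in (0:ℝ)..1, ∑ j ∈ Finset.range (n+1),
          (fun (j : ℕ) (t : ℝ) => ((n.choose j : ℝ) * u ^ j * (1 - u) ^ (n - j)) *
            (t ^ (-(1/2):ℝ) * ((1-t) ^ ((1/2):ℝ) * (1-2*t)^j))) j t := by
    apply intervalIntegral.integral_congr
    intro t _
    simp only
    have hb : (1 - 2*u*t) = (u*(1-2*t)) + (1-u) := by ring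
    rw [hb, add_pow, Finset.mul_sum]
    refine Finset.sum_congr rfl fun j hj => ?_
    rw [mul_pow]
    ring
  rw [hcongr, intervalIntegral.integral_finset_sum
    (fun j _ => ((hint j).const_mul _))]
  simp only [intervalIntegral.integral_const_mul]
  rw [Finset.mul_sum]
  refine Finset.sum_congr rfl fun j _ => ?_
  rw [keyIntegral j]
  have hπ : Real.pi ≠ 0 := Real.pi_ne_zero
  field_simp
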